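/- arXiv:2306.07707 — 2 statements merged into one kernel-verified Lean document; each statement's English description precedes it below -/
import Mathlib

section
/- For any DAG G, if the 1-influential set {i_1, …, i_m} (ordered by decreasing rank) has m > 1 elements, then for every t with 1 < t ≤ m, 2·|P(i_t)| ≥ |P(i_1)|, where P denotes progeny in G. -/
attribute [local instance] Classical.propDecidable

/-- The progeny of node `i`: all nodes with a directed path to `i`, including `i`. -/
noncomputable def progeny {n : ℕ} (E : Finset (Fin n × Fin n)) (i : Fin n) : Finset (Fin n) :=
  Finset.univ.filter (fun j => Relation.ReflTransGen (fun u v => (u, v) ∈ E) j i)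

/-- The graph is acyclic. -/
def Acyclic {n : ℕ} (E : Finset (Fin n × Fin n)) : Prop :=
  ∀ i : Fin n, ¬ Relation.TransGen (fun u v => (u, v) ∈ E) i i

/-- `Prec E i j` means `i ≻ j` : larger progeny, ties broken by larger index. -/
def Prec {n : ℕ} (E : Finset (Fin n × Fin n)) (i j : Fin n) : Prop :=
  (progeny E j).card < (progeny E i).card ∨
    ((progeny E j).card = (progeny E i).card ∧ j < i)

/-- Delete all out-edges of node `i`. -/
noncomputable def delOut {n : ℕ} (E : Finset (Fin n × Fin n)) (i : Fin n) :
    Finset (Fin n × Fin n) := E.filter (fun e => e.1 ≠ i)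

/-- `i` is in the `k`-influential set: fewer than `k` nodes outrank `i`
after `i` deletes all her out-edges. -/
noncomputable def Influential {n : ℕ} (k : ℕ) (E : Finset (Fin n × Fin n)) (i : Fin n) : Prop :=
  (Finset.univ.filter (fun j => Prec (delOut E i) j i)).card < k

/-- Deleting out-edges of `i` does not change `i`'s progeny, in an acyclic graph. -/
lemma progeny_delOut_self {n : ℕ} (E : Finset (Fin n × Fin n)) (hE : Acyclic E) (i : Fin n) :
    progeny (delOut E i) i = progeny E i := by
  ext j
  simp only [progeny, Finset.mem_filter, Finset.mem_univ, true_and]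
  constructor
  · intro h
    refine Relation.ReflTransGen.mono ?_ _ _ h
    intro u v huv
    simp only [delOut, Finset.mem_filter] at huv
    exact huv.1
  · intro h
    induction h using Relation.ReflTransGen.head_induction_on with
    | refl => exact Relation.ReflTransGen.refl
    | @head a b hab hbc ih =>

      by_cases ha : a = i
      · exact absurd (Relation.TransGen.head' (ha ▸ hab) hbc) (hE i)
      · exact Relation.ReflTransGen.head (by simp [delOut, hab, ha]) ih

/-- A path to `j` either avoids out-edges of `i`, or its source reaches `i`. -/
lemma progeny_subset_union {n : ℕ} (E : Finset (Fin n × Fin n)) (i j : Fin n) :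
    progeny E j ⊆ progeny (delOut E i) j ∪ progeny E i := by
  intro x hx
  simp only [progeny, Finset.mem_filter, Finset.mem_univ, true_and, Finset.mem_union] at hx ⊢
  induction hx using Relation.ReflTransGen.head_induction_on with
  | refl => exact Or.inl Relation.ReflTransGen.refl
  | @head a b hab hbc ih =>
    by_cases ha : a = i
    · subst ha; exact Or.inr Relation.ReflTransGen.refl
    · rcases ih with h | h
      · exact Or.inl (Relation.ReflTransGen.head (by simp [delOut, hab, ha]) h)
      · exact Or.inr (Relation.ReflTransGen.head hab h)

/-- if the 1-influential set, ordered decreasingly, has m > 1 elements,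
then every non-first element i_t satisfies 2·|P(i_t)| ≥ |P(i₁)|. -/
theorem stmt1 {n m : ℕ} (E : Finset (Fin n × Fin n)) (hE : Acyclic E) (hm : 1 < m)
    (f : Fin m → Fin n)
    (henum : ∀ i : Fin n, Influential 1 E i ↔ ∃ t : Fin m, f t = i)
    (hord : ∀ t s : Fin m, t < s → Prec E (f t) (f s)) :
    ∀ t : Fin m, 0 < (t : ℕ) →
      (progeny E (f ⟨0, by omega⟩)).card ≤ 2 * (progeny E (f t)).card := by
  intro t _
  set i₁ := f ⟨0, by omega⟩
  set it := f t
  have hinf : Influential 1 E it := (henum it).mpr ⟨t, rfl⟩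
  have hnot : ¬ Prec (delOut E it) i₁ it := by
    intro hp
    have : i₁ ∈ Finset.univ.filter (fun j => Prec (delOut E it) j it) := by
      simp [hp]
    have hcard := Finset.card_pos.mpr ⟨i₁, this⟩
    unfold Influential at hinf
    omega
  have heq : progeny (delOut E it) it = progeny E it := progeny_delOut_self E hE it
  have h1 : (progeny (delOut E it) i₁).card ≤ (progeny E it).card := by
    unfold Prec at hnot
    push_neg at hnot
    rw [heq] at hnot
    by_contra h
    omega
  calc (progeny E i₁).card
      ≤ (progeny (delOut E it) i₁ ∪ progeny E it).card :=
        Finset.card_le_card (progeny_subset_union E it i₁)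
    _ ≤ (progeny (delOut E it) i₁).card + (progeny E it).card := Finset.card_union_le _ _
    _ ≤ 2 * (progeny E it).card := by omega
end

section
/- For any DAG G in which i₂* ∈ P(i₁*), the 2-influential set can be written as {i_1, i_2, …, i_m} ordered by decreasing rank, where i_1 = i₁*, i_2 = i₂*, and i_{t+1} ∈ P(i_t) for all t < m. -/
attribute [local instance] Classical.propDecidable

section Aux

variable {n : ℕ} {E : Finset (Fin n × Fin n)}

/-- abbreviation for the edge relation -/
def EdgeRel (E : Finset (Fin n × Fin n)) : Fin n → Fin n → Prop := fun u v => (u, v) ∈ E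

lemma mem_progeny {i j : Fin n} :
    j ∈ progeny E i ↔ Relation.ReflTransGen (EdgeRel E) j i := by
  simp only [progeny, Finset.mem_filter, Finset.mem_univ, true_and]
  rfl

lemma self_mem_progeny (i : Fin n) : i ∈ progeny E i :=
  mem_progeny.mpr Relation.ReflTransGen.refl

lemma rtg_antisymm (hE : Acyclic E) {a b : Fin n}
    (h1 : Relation.ReflTransGen (EdgeRel E) a b) (h2 : Relation.ReflTransGen (EdgeRel E) b a) :
    a = b := by
  rcases h1.cases_head with h | ⟨c, hac, hcb⟩
  · exact h
  · exact absurd (Relation.TransGen.head' hac (hcb.trans h2)) (hE a)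

lemma edge_delOut {i : Fin n} {u v : Fin n} :
    EdgeRel (delOut E i) u v ↔ (u, v) ∈ E ∧ u ≠ i := by
  simp [EdgeRel, delOut]

lemma rtg_of_del {i : Fin n} {a b : Fin n}
    (h : Relation.ReflTransGen (EdgeRel (delOut E i)) a b) :
    Relation.ReflTransGen (EdgeRel E) a b :=
  Relation.ReflTransGen.mono (fun _ _ hu => (edge_delOut.mp hu).1) _ _ h

lemma progeny_del_subset (i j : Fin n) : progeny (delOut E i) j ⊆ progeny E j := by
  intro a ha
  exact mem_progeny.mpr (rtg_of_del (mem_progeny.mp ha))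

lemma avoidSelf (hE : Acyclic E) {a i : Fin n} (h : Relation.ReflTransGen (EdgeRel E) a i) :
    Relation.ReflTransGen (EdgeRel (delOut E i)) a i := by
  induction h using Relation.ReflTransGen.head_induction_on with
  | refl => exact Relation.ReflTransGen.refl
  | head hac hcb ih =>
    refine Relation.ReflTransGen.head (edge_delOut.mpr ⟨hac, ?_⟩) ih
    rintro rfl
    exact hE _ (Relation.TransGen.head' hac hcb)

lemma avoidR {i b : Fin n} (hib : ¬ Relation.ReflTransGen (EdgeRel E) i b) {a : Fin n}
    (h : Relation.ReflTransGen (EdgeRel E) a b) :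
    Relation.ReflTransGen (EdgeRel (delOut E i)) a b := by
  induction h using Relation.ReflTransGen.head_induction_on with
  | refl => exact Relation.ReflTransGen.refl
  | head hac hcb ih =>
    refine Relation.ReflTransGen.head (edge_delOut.mpr ⟨hac, ?_⟩) ih
    rintro rfl
    exact hib (Relation.ReflTransGen.head hac hcb)

lemma avoidL {i b a : Fin n} (h : Relation.ReflTransGen (EdgeRel E) a b)
    (hai : ¬ Relation.ReflTransGen (EdgeRel E) a i) :
    Relation.ReflTransGen (EdgeRel (delOut E i)) a b := by
  revert hai
  induction h using Relation.ReflTransGen.head_induction_on with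
  | refl => exact fun _ => Relation.ReflTransGen.refl
  | @head a' c hac hcb ih =>
    intro hai
    refine Relation.ReflTransGen.head (edge_delOut.mpr ⟨hac, ?_⟩) (ih ?_)
    · rintro rfl
      exact hai Relation.ReflTransGen.refl
    · intro hci
      exact hai (Relation.ReflTransGen.head hac hci)

lemma progeny_del_self (hE : Acyclic E) (i : Fin n) :
    progeny (delOut E i) i = progeny E i := by
  apply Finset.Subset.antisymm (progeny_del_subset i i)
  intro a ha
  exact mem_progeny.mpr (avoidSelf hE (mem_progeny.mp ha))

lemma progeny_del_of_not_mem {i j : Fin n} (h : ¬ Relation.ReflTransGen (EdgeRel E) i j) :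
    progeny (delOut E i) j = progeny E j := by
  apply Finset.Subset.antisymm (progeny_del_subset i j)
  intro a ha
  exact mem_progeny.mpr (avoidR h (mem_progeny.mp ha))

lemma prec_asymm {i j : Fin n} (h1 : Prec E i j) (h2 : Prec E j i) : False := by
  simp only [Prec, Fin.lt_def] at h1 h2; omega

lemma prec_irrefl (i : Fin n) : ¬ Prec E i i := fun h => prec_asymm h h

lemma prec_total {i j : Fin n} (h : i ≠ j) : Prec E i j ∨ Prec E j i := by
  have : (i : ℕ) ≠ (j : ℕ) := fun hv => h (Fin.ext hv)
  simp only [Prec, Fin.lt_def]; omega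

lemma prec_trans {i j k : Fin n} (h1 : Prec E i j) (h2 : Prec E j k) : Prec E i k := by
  simp only [Prec, Fin.lt_def] at h1 h2 ⊢; omega

lemma prec_del_imp (hE : Acyclic E) {i j : Fin n} (h : Prec (delOut E i) j i) :
    Prec E j i := by
  have h1 := progeny_del_self hE i
  have h2 := Finset.card_le_card (progeny_del_subset (E := E) i j)
  simp only [Prec, h1, Fin.lt_def] at h ⊢
  omega


lemma prec_del_of_not_mem (hE : Acyclic E) {i j : Fin n} (h : Prec E j i)
    (hnm : ¬ Relation.ReflTransGen (EdgeRel E) i j) : Prec (delOut E i) j i := by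
  unfold Prec
  rw [progeny_del_self hE, progeny_del_of_not_mem hnm]
  exact h

lemma inf_first (hE : Acyclic E) {i1 : Fin n} (hi1 : ∀ j : Fin n, j ≠ i1 → Prec E i1 j) :
    Influential 2 E i1 := by
  unfold Influential
  have hemp : (Finset.univ.filter (fun j => Prec (delOut E i1) j i1)) = ∅ := by
    rw [Finset.filter_eq_empty_iff]
    intro j _ hP
    have hPE : Prec E j i1 := prec_del_imp hE hP
    by_cases hj : j = i1
    · subst hj; exact prec_irrefl j hPE
    · exact prec_asymm hPE (hi1 j hj)
  rw [hemp]
  simp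

lemma inf_second (hE : Acyclic E) {i1 i2 : Fin n}
    (hi2 : ∀ j : Fin n, j ≠ i1 → j ≠ i2 → Prec E i2 j) :
    Influential 2 E i2 := by
  unfold Influential
  have hsub : (Finset.univ.filter (fun j => Prec (delOut E i2) j i2)) ⊆ {i1} := by
    intro j hj
    rw [Finset.mem_filter] at hj
    have hPE : Prec E j i2 := prec_del_imp hE hj.2
    rw [Finset.mem_singleton]
    by_contra hne1
    by_cases hne2 : j = i2
    · subst hne2; exact prec_irrefl j hPE
    · exact prec_asymm hPE (hi2 j hne1 hne2)
  have := Finset.card_le_card hsub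
  simp only [Finset.card_singleton] at this
  omega

lemma chain_lem (hE : Acyclic E) {i1 i2 : Fin n} (h12 : i1 ≠ i2)
    (hi1 : ∀ j : Fin n, j ≠ i1 → Prec E i1 j)
    (hi2 : ∀ j : Fin n, j ≠ i1 → j ≠ i2 → Prec E i2 j)
    (h2in1 : i2 ∈ progeny E i1)
    {i j : Fin n} (hi : Influential 2 E i) (hj : Influential 2 E j)
    (hji : Prec E j i) (hjne1 : j ≠ i1) : i ∈ progeny E j := by
  rw [mem_progeny]
  by_contra hnotin
  have hine1 : i ≠ i1 := by rintro rfl; exact prec_asymm hji (hi1 j hjne1)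
  -- no path from j to i either
  have hnotin2 : ¬ Relation.ReflTransGen (EdgeRel E) j i := by
    intro hpath
    have hsub : progeny E j ⊆ progeny E i := by
      intro a ha
      rw [mem_progeny] at ha ⊢
      exact ha.trans hpath
    have hcard := Finset.card_le_card hsub
    rcases hji with h | ⟨heq, _⟩
    · omega
    · have heqset : progeny E j = progeny E i :=
        Finset.eq_of_subset_of_card_le hsub heq.le
      exact hnotin (mem_progeny.mp (heqset ▸ self_mem_progeny i))
  -- find a witness k above i reachable from j
  obtain ⟨k, hk1, hk2, hk3⟩ :
      ∃ k, Relation.ReflTransGen (EdgeRel E) j k ∧ Prec E k i ∧ k ≠ j := by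
    rcases eq_or_ne j i2 with rfl | hjne2
    · exact ⟨i1, mem_progeny.mp h2in1, hi1 i hine1, h12⟩
    · have hine2 : i ≠ i2 := by rintro rfl; exact prec_asymm hji (hi2 j hjne1 hjne2)
      have hor : Relation.ReflTransGen (EdgeRel E) j i1 ∨
          Relation.ReflTransGen (EdgeRel E) j i2 := by
        by_contra hcon
        push_neg at hcon
        have p1 : Prec (delOut E j) i1 j := prec_del_of_not_mem hE (hi1 j hjne1) hcon.1
        have p2 : Prec (delOut E j) i2 j := prec_del_of_not_mem hE (hi2 j hjne1 hjne2) hcon.2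
        have hsub2 : ({i1, i2} : Finset (Fin n)) ⊆
            Finset.univ.filter (fun x => Prec (delOut E j) x j) := by
          intro x hx
          rw [Finset.mem_insert, Finset.mem_singleton] at hx
          rw [Finset.mem_filter]
          rcases hx with rfl | rfl
          · exact ⟨Finset.mem_univ _, p1⟩
          · exact ⟨Finset.mem_univ _, p2⟩
        have hcard2 := Finset.card_le_card hsub2
        rw [Finset.card_pair h12] at hcard2
        unfold Influential at hj
        omega
      rcases hor with h | h
      · exact ⟨i1, h, hi1 i hine1, Ne.symm hjne1⟩
      · exact ⟨i2, h, hi2 i hine1 hine2, Ne.symm hjne2⟩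
  -- j outranks i after deletion; k cannot also outrank i
  have hPj : Prec (delOut E i) j i := prec_del_of_not_mem hE hji hnotin
  have hnk : ¬ Prec (delOut E i) k i := by
    intro hPk
    have hsub2 : ({j, k} : Finset (Fin n)) ⊆
        Finset.univ.filter (fun x => Prec (delOut E i) x i) := by
      intro x hx
      rw [Finset.mem_insert, Finset.mem_singleton] at hx
      rw [Finset.mem_filter]
      rcases hx with rfl | rfl
      · exact ⟨Finset.mem_univ _, hPj⟩
      · exact ⟨Finset.mem_univ _, hPk⟩
    have hcard2 := Finset.card_le_card hsub2
    rw [Finset.card_pair (Ne.symm hk3)] at hcard2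
    unfold Influential at hi
    omega
  -- progeny of j is contained in progeny of k after deleting out-edges of i
  have hsub3 : progeny E j ⊆ progeny (delOut E i) k := by
    intro a ha
    rw [mem_progeny] at ha ⊢
    exact (avoidR hnotin ha).trans (avoidL hk1 hnotin2)
  have hc3 := Finset.card_le_card hsub3
  rw [Prec, progeny_del_self hE] at hnk
  push_neg at hnk
  obtain ⟨hle, _⟩ := hnk
  -- cards are all equal
  have hcc : (progeny E j).card = (progeny (delOut E i) k).card := by
    rcases hji with h | ⟨heq, _⟩ <;> omega
  have heqset : progeny E j = progeny (delOut E i) k :=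
    Finset.eq_of_subset_of_card_le hsub3 hcc.ge
  have hkj : Relation.ReflTransGen (EdgeRel E) k j := by
    have : k ∈ progeny E j := heqset ▸ self_mem_progeny k
    exact mem_progeny.mp this
  exact hk3 (rtg_antisymm hE hkj hk1)

end Aux

/-- if i₂* ∈ P(i₁*), the 2-influential set can be ordered decreasingly
as i₁, i₂, …, i_m with i₁ = i₁*, i₂ = i₂*, and i_{t+1} ∈ P(i_t) for all t < m. -/
theorem stmt10 {n : ℕ} (hn : 2 ≤ n) (E : Finset (Fin n × Fin n)) (hE : Acyclic E)
    (i1 i2 : Fin n) (h12 : i1 ≠ i2)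
    (hi1 : ∀ j : Fin n, j ≠ i1 → Prec E i1 j)
    (hi2 : ∀ j : Fin n, j ≠ i1 → j ≠ i2 → Prec E i2 j)
    (h2in1 : i2 ∈ progeny E i1) :
    ∃ m : ℕ, ∃ _ : 2 ≤ m, ∃ f : Fin m → Fin n,
      (∀ i : Fin n, Influential 2 E i ↔ ∃ t : Fin m, f t = i) ∧
      (∀ t s : Fin m, t < s → Prec E (f t) (f s)) ∧
      f ⟨0, by omega⟩ = i1 ∧ f ⟨1, by omega⟩ = i2 ∧
      (∀ t : Fin m, ∀ h : (t : ℕ) + 1 < m,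
        f ⟨(t : ℕ) + 1, h⟩ ∈ progeny E (f t)) := by
  have hInf1 : Influential 2 E i1 := inf_first hE hi1
  have hInf2 : Influential 2 E i2 := inf_second hE hi2
  set r : Fin n → Fin n → Prop := fun a b => Prec E a b ∨ a = b with hrdef
  haveI : IsTrans (Fin n) r := ⟨by
    intro a b c hab hbc
    rcases hab with h | rfl
    · rcases hbc with h' | rfl
      · exact Or.inl (prec_trans h h')
      · exact Or.inl h
    · exact hbc⟩
  haveI : IsAntisymm (Fin n) r := ⟨by
    intro a b hab hba
    rcases hab with h | rfl
    · rcases hba with h' | rfl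
      · exact absurd h' (fun h' => prec_asymm h h')
      · rfl
    · rfl⟩
  haveI : IsTotal (Fin n) r := ⟨by
    intro a b
    rcases eq_or_ne a b with rfl | hne
    · exact Or.inl (Or.inr rfl)
    · rcases prec_total (E := E) hne with h | h
      · exact Or.inl (Or.inl h)
      · exact Or.inr (Or.inl h)⟩
  set S := Finset.univ.filter (fun i => Influential 2 E i) with hS
  set l := S.sort r with hl
  have hmem : ∀ a, a ∈ l ↔ Influential 2 E a := by
    intro a
    rw [hl, Finset.mem_sort, hS, Finset.mem_filter]
    simp
  have hsorted : l.Pairwise r := Finset.pairwise_sort (s := S) (r := r)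
  have hnodup : l.Nodup := Finset.sort_nodup (s := S) (r := r)
  have hgetinj : Function.Injective l.get := List.nodup_iff_injective_get.mp hnodup
  have hstrict : ∀ t s : Fin l.length, t < s → Prec E (l.get t) (l.get s) := by
    intro t s hts
    rcases List.pairwise_iff_get.mp hsorted t s hts with h | h
    · exact h
    · exact absurd (hgetinj h) (ne_of_lt hts)
  obtain ⟨t1, ht1⟩ := List.mem_iff_get.mp ((hmem i1).mpr hInf1)
  obtain ⟨t2, ht2⟩ := List.mem_iff_get.mp ((hmem i2).mpr hInf2)
  have ht12 : t1 ≠ t2 := by rintro rfl; exact h12 (ht1.symm.trans ht2)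
  have hm2 : 2 ≤ l.length := by
    have h1 := t1.isLt
    have h2 := t2.isLt
    have h3 : (t1 : ℕ) ≠ (t2 : ℕ) := fun h => ht12 (Fin.ext h)
    omega
  have hget0 : l.get ⟨0, by omega⟩ = i1 := by
    by_contra hne
    have hv : (t1 : ℕ) ≠ 0 := fun h => hne (by rwa [show t1 = ⟨0, by omega⟩ from Fin.ext h] at ht1)
    have hlt : (⟨0, by omega⟩ : Fin l.length) < t1 := by
      rw [Fin.lt_def]
      exact (show 0 < (t1 : ℕ) by omega)
    exact prec_asymm (ht1 ▸ hstrict _ t1 hlt) (hi1 _ hne)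
  have hget1 : l.get ⟨1, by omega⟩ = i2 := by
    by_contra hne
    have hne2 : (t2 : ℕ) ≠ 1 := fun h => hne (by rwa [show t2 = ⟨1, by omega⟩ from Fin.ext h] at ht2)
    have hne0 : (t2 : ℕ) ≠ 0 := by
      intro h
      rw [show t2 = ⟨0, by omega⟩ from Fin.ext h, hget0] at ht2
      exact h12 ht2
    have hlt : (⟨1, by omega⟩ : Fin l.length) < t2 := by
      rw [Fin.lt_def]
      exact (show 1 < (t2 : ℕ) by omega)
    have hgne1 : l.get ⟨1, by omega⟩ ≠ i1 := by
      intro h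
      have := hgetinj (h.trans hget0.symm)
      simp [Fin.ext_iff] at this
    exact prec_asymm (ht2 ▸ hstrict _ t2 hlt) (hi2 _ hgne1 hne)
  refine ⟨l.length, hm2, fun t => l.get t, ?_, fun t s h => hstrict t s h, hget0, hget1, ?_⟩
  · intro i
    exact (hmem i).symm.trans List.mem_iff_get
  · intro t h
    show l.get ⟨(t : ℕ) + 1, h⟩ ∈ progeny E (l.get t)
    have hb : Influential 2 E (l.get ⟨(t : ℕ) + 1, h⟩) :=
      (hmem _).mp (List.mem_iff_get.mpr ⟨_, rfl⟩)
    have ha : Influential 2 E (l.get t) :=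
      (hmem _).mp (List.mem_iff_get.mpr ⟨_, rfl⟩)
    have hPab : Prec E (l.get t) (l.get ⟨(t : ℕ) + 1, h⟩) :=
      hstrict t _ (by rw [Fin.lt_def]; exact Nat.lt_succ_self _)
    rcases eq_or_ne (t : ℕ) 0 with h0 | h0
    · have e1 : l.get ⟨(t : ℕ) + 1, h⟩ = i2 := by
        rw [← hget1]
        congr 1
        exact Fin.ext (by simp [h0])
      have e2 : l.get t = i1 := by
        rw [← hget0]
        congr 1
        exact Fin.ext h0
      rw [e1, e2]
      exact h2in1
    · have hane1 : l.get t ≠ i1 := by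
        intro hh
        have := hgetinj (hh.trans hget0.symm)
        rw [Fin.ext_iff] at this
        exact h0 this
      exact chain_lem hE h12 hi1 hi2 h2in1 hb ha hPab hane1
end
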